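/- Let X be a random vector in ℝ^d with E[X] = x, E[‖X − x‖^α] ≤ σ^α for some σ ≥ 0 and α ∈ (1,2], and ‖x‖ ≤ λ/2 for some λ > 0. Then E[‖clip(X,λ) − E[clip(X,λ)]‖²] ≤ 18 λ^{2−α} σ^α. -/

import Mathlib

open MeasureTheory

/-- The clipping operator `clip(x, λ) = min{1, λ/‖x‖}·x` (with `clip(0, λ) = 0`). -/
noncomputable def clip {d : ℕ} (lam : ℝ) (x : EuclideanSpace ℝ (Fin d)) :
    EuclideanSpace ℝ (Fin d) :=
  min 1 (lam / ‖x‖) • x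

lemma clip_of_norm_le {d : ℕ} {lam : ℝ} {z : EuclideanSpace ℝ (Fin d)}
    (h : ‖z‖ ≤ lam) : clip lam z = z := by
  rcases eq_or_ne z 0 with rfl | hz
  · simp [clip]
  · have hz' : 0 < ‖z‖ := norm_pos_iff.mpr hz
    have h1 : (1:ℝ) ≤ lam / ‖z‖ := (one_le_div hz').mpr h
    simp [clip, min_eq_left h1]

lemma norm_clip_le {d : ℕ} {lam : ℝ} (hlam : 0 < lam) (z : EuclideanSpace ℝ (Fin d)) :
    ‖clip lam z‖ ≤ lam := by
  rcases eq_or_ne z 0 with rfl | hz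
  · simpa [clip] using hlam.le
  · have hz' : 0 < ‖z‖ := norm_pos_iff.mpr hz
    have h0 : 0 ≤ min 1 (lam / ‖z‖) := le_min one_pos.le (by positivity)
    rw [clip, norm_smul, Real.norm_eq_abs, abs_of_nonneg h0]
    calc min 1 (lam / ‖z‖) * ‖z‖ ≤ (lam / ‖z‖) * ‖z‖ :=
          mul_le_mul_of_nonneg_right (min_le_right _ _) hz'.le
      _ = lam := div_mul_cancel₀ _ hz'.ne'

lemma norm_clip_sub_le {d : ℕ} {lam : ℝ} (hlam : 0 < lam)
    {x z : EuclideanSpace ℝ (Fin d)} (hx : ‖x‖ ≤ lam / 2) :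
    ‖clip lam z - x‖ ≤ 3 * ‖z - x‖ := by
  rcases le_or_gt ‖z‖ lam with h | h
  · rw [clip_of_norm_le h]
    nlinarith [norm_nonneg (z - x)]
  · have h1 : ‖clip lam z - x‖ ≤ lam + lam / 2 := by
      calc ‖clip lam z - x‖ ≤ ‖clip lam z‖ + ‖x‖ := norm_sub_le _ _
        _ ≤ lam + lam / 2 := add_le_add (norm_clip_le hlam z) hx
    have h2 : lam / 2 ≤ ‖z - x‖ := by
      have := norm_sub_norm_le z x
      have h3 : ‖z‖ - ‖x‖ ≤ ‖z - x‖ := by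
        calc ‖z‖ - ‖x‖ ≤ |‖z‖ - ‖x‖| := le_abs_self _
          _ ≤ ‖z - x‖ := abs_norm_sub_norm_le z x
      linarith
    linarith

set_option maxHeartbeats 1000000 in
/-- variance of the clipped estimator:
`E[‖clip(X,λ) − E[clip(X,λ)]‖²] ≤ 18 λ^{2−α} σ^α`. -/
theorem clip_variance_bound {d : ℕ} {Ω : Type*} [MeasurableSpace Ω]
    (μ : Measure Ω) [IsProbabilityMeasure μ]
    (X : Ω → EuclideanSpace ℝ (Fin d)) (hX : Integrable X μ)
    (x : EuclideanSpace ℝ (Fin d)) (hmean : ∫ ω, X ω ∂μ = x)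
    (σ α lam : ℝ) (hσ : 0 ≤ σ) (hα₁ : 1 < α) (hα₂ : α ≤ 2) (hlam : 0 < lam)
    (hmom_int : Integrable (fun ω => ‖X ω - x‖ ^ α) μ)
    (hmom : ∫ ω, ‖X ω - x‖ ^ α ∂μ ≤ σ ^ α)
    (hx : ‖x‖ ≤ lam / 2) :
    ∫ ω, ‖clip lam (X ω) - ∫ ω', clip lam (X ω') ∂μ‖ ^ 2 ∂μ
      ≤ 18 * lam ^ (2 - α) * σ ^ α := by
  set Y : Ω → EuclideanSpace ℝ (Fin d) := fun ω => clip lam (X ω) with hY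
  -- measurability of Y
  have hXm := hX.aestronglyMeasurable
  have h1 : AEMeasurable (fun ω => min 1 (lam / ‖X ω‖)) μ :=
    aemeasurable_const.min (aemeasurable_const.div hXm.norm.aemeasurable)
  have hYm : AEStronglyMeasurable Y μ := h1.aestronglyMeasurable.smul hXm
  have hYbd : ∀ ω, ‖Y ω‖ ≤ lam := fun ω => norm_clip_le hlam (X ω)
  have hYint : Integrable Y μ :=
    (integrable_const lam).mono' hYm (Filter.Eventually.of_forall hYbd)
  set m : EuclideanSpace ℝ (Fin d) := ∫ ω, Y ω ∂μ with hm
  -- bound on ‖Y ω - x‖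
  have hsub3 : ∀ ω, ‖Y ω - x‖ ≤ 3 * ‖X ω - x‖ := fun ω => norm_clip_sub_le hlam hx
  have hsublam : ∀ ω, ‖Y ω - x‖ ≤ 3 * lam / 2 := by
    intro ω
    calc ‖Y ω - x‖ ≤ ‖Y ω‖ + ‖x‖ := norm_sub_le _ _
      _ ≤ lam + lam / 2 := add_le_add (hYbd ω) hx
      _ = 3 * lam / 2 := by ring
  -- key pointwise bound
  have key : ∀ ω, ‖Y ω - x‖ ^ 2 ≤ 18 * lam ^ (2 - α) * ‖X ω - x‖ ^ α := by
    intro ω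
    set a := ‖Y ω - x‖ with ha
    have ha0 : 0 ≤ a := norm_nonneg _
    have h2 : (a : ℝ) ^ (2:ℕ) = a ^ ((2:ℝ) - α) * a ^ α := by
      rw [← Real.rpow_natCast a 2, ← Real.rpow_add' ha0 (by norm_num)]
      norm_num
    rw [h2]
    have hb1 : a ^ ((2:ℝ) - α) ≤ (3 * lam / 2) ^ ((2:ℝ) - α) :=
      Real.rpow_le_rpow ha0 (hsublam ω) (by linarith)
    have hb2 : a ^ α ≤ (3 * ‖X ω - x‖) ^ α :=
      Real.rpow_le_rpow ha0 (hsub3 ω) (by linarith)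
    have hc1 : (3 * lam / 2) ^ ((2:ℝ) - α) = (3/2 : ℝ) ^ ((2:ℝ) - α) * lam ^ ((2:ℝ) - α) := by
      rw [← Real.mul_rpow (by norm_num) hlam.le]; ring_nf
    have hc2 : (3 * ‖X ω - x‖) ^ α = (3:ℝ) ^ α * ‖X ω - x‖ ^ α :=
      Real.mul_rpow (by norm_num) (norm_nonneg _)
    have hd1 : (3/2 : ℝ) ^ ((2:ℝ) - α) ≤ 3/2 := by
      calc (3/2 : ℝ) ^ ((2:ℝ) - α) ≤ (3/2 : ℝ) ^ (1:ℝ) :=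
            Real.rpow_le_rpow_of_exponent_le (by norm_num) (by linarith)
        _ = 3/2 := Real.rpow_one _
    have hd2 : (3:ℝ) ^ α ≤ 9 := by
      calc (3:ℝ) ^ α ≤ (3:ℝ) ^ (2:ℝ) := Real.rpow_le_rpow_of_exponent_le (by norm_num) hα₂
        _ = 9 := by rw [show (2:ℝ) = ((2:ℕ):ℝ) by norm_num, Real.rpow_natCast]; norm_num
    have hnn1 : (0:ℝ) ≤ a ^ ((2:ℝ) - α) := Real.rpow_nonneg ha0 _
    have hnn2 : (0:ℝ) ≤ a ^ α := Real.rpow_nonneg ha0 _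
    have hnn3 : (0:ℝ) ≤ lam ^ ((2:ℝ) - α) := Real.rpow_nonneg hlam.le _
    have hnn4 : (0:ℝ) ≤ ‖X ω - x‖ ^ α := Real.rpow_nonneg (norm_nonneg _) _
    calc a ^ ((2:ℝ) - α) * a ^ α
        ≤ (3 * lam / 2) ^ ((2:ℝ) - α) * (3 * ‖X ω - x‖) ^ α := by
          apply mul_le_mul hb1 hb2 hnn2 (Real.rpow_nonneg (by positivity) _)
      _ = ((3/2 : ℝ) ^ ((2:ℝ) - α) * (3:ℝ) ^ α) * (lam ^ ((2:ℝ) - α) * ‖X ω - x‖ ^ α) := by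
          rw [hc1, hc2]; ring
      _ ≤ 18 * (lam ^ ((2:ℝ) - α) * ‖X ω - x‖ ^ α) := by
          apply mul_le_mul_of_nonneg_right _ (by positivity)
          calc (3/2 : ℝ) ^ ((2:ℝ) - α) * (3:ℝ) ^ α ≤ (3/2) * 9 := by
                apply mul_le_mul hd1 hd2 (Real.rpow_nonneg (by norm_num) _) (by norm_num)
            _ ≤ 18 := by norm_num
      _ = 18 * lam ^ ((2:ℝ) - α) * ‖X ω - x‖ ^ α := by ring
  -- integrability of ‖Y - x‖^2
  have hYsm : AEStronglyMeasurable (fun ω => Y ω - x) μ := hYm.sub aestronglyMeasurable_const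
  have hsq_m : AEStronglyMeasurable (fun ω => ‖Y ω - x‖ ^ 2) μ :=
    (hYsm.norm.aemeasurable.pow_const 2).aestronglyMeasurable
  have hsq_int : Integrable (fun ω => ‖Y ω - x‖ ^ 2) μ := by
    refine (integrable_const ((3 * lam / 2) ^ 2)).mono' hsq_m
      (Filter.Eventually.of_forall fun ω => ?_)
    rw [Real.norm_eq_abs, abs_of_nonneg (by positivity)]
    exact pow_le_pow_left₀ (norm_nonneg _) (hsublam ω) 2
  -- step 1 : ∫ ‖Y - x‖^2 ≤ 18 λ^(2-α) σ^α
  have step1 : ∫ ω, ‖Y ω - x‖ ^ 2 ∂μ ≤ 18 * lam ^ (2 - α) * σ ^ α := by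
    have h18 : (0:ℝ) ≤ 18 * lam ^ (2 - α) := by positivity
    calc ∫ ω, ‖Y ω - x‖ ^ 2 ∂μ
        ≤ ∫ ω, 18 * lam ^ (2 - α) * ‖X ω - x‖ ^ α ∂μ :=
          integral_mono hsq_int (hmom_int.const_mul _) key
      _ = 18 * lam ^ (2 - α) * ∫ ω, ‖X ω - x‖ ^ α ∂μ := integral_const_mul _ _
      _ ≤ 18 * lam ^ (2 - α) * σ ^ α := mul_le_mul_of_nonneg_left hmom h18
  -- step 2 : variance inequality
  have hYx_int : Integrable (fun ω => Y ω - x) μ := hYint.sub (integrable_const x)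
  have hYx_mean : ∫ ω, Y ω - x ∂μ = m - x := by
    rw [integral_sub hYint (integrable_const x), integral_const]
    simp [hm]
  have hinner_int : Integrable (fun ω => (inner ℝ (m - x) (Y ω - x) : ℝ)) μ :=
    hYx_int.const_inner _
  have hptwise : ∀ ω, ‖Y ω - m‖ ^ 2
      = ‖Y ω - x‖ ^ 2 - 2 * (inner ℝ (m - x) (Y ω - x) : ℝ) + ‖m - x‖ ^ 2 := by
    intro ω
    have he : Y ω - m = (Y ω - x) - (m - x) := by abel
    rw [he, norm_sub_sq_real, real_inner_comm]
  have hvar : ∫ ω, ‖Y ω - m‖ ^ 2 ∂μ = ∫ ω, ‖Y ω - x‖ ^ 2 ∂μ - ‖m - x‖ ^ 2 := by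
    have : ∫ ω, ‖Y ω - m‖ ^ 2 ∂μ
        = ∫ ω, (‖Y ω - x‖ ^ 2 - 2 * (inner ℝ (m - x) (Y ω - x) : ℝ) + ‖m - x‖ ^ 2) ∂μ :=
      integral_congr_ae (Filter.Eventually.of_forall hptwise)
    have hint2 : Integrable (fun ω => ‖Y ω - x‖ ^ 2 - 2 * (inner ℝ (m - x) (Y ω - x) : ℝ)) μ :=
      hsq_int.sub (hinner_int.const_mul 2)
    rw [this, integral_add hint2 (integrable_const _),
      integral_sub hsq_int (hinner_int.const_mul 2), integral_const, integral_const_mul,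
      integral_inner hYx_int, hYx_mean, real_inner_self_eq_norm_sq]
    simp only [measure_univ, probReal_univ, ENNReal.toReal_one, one_smul, smul_eq_mul, one_mul]
    ring
  rw [show (fun ω => ‖clip lam (X ω) - ∫ ω', clip lam (X ω') ∂μ‖ ^ 2)
      = fun ω => ‖Y ω - m‖ ^ 2 from rfl] at *
  calc ∫ ω, ‖Y ω - m‖ ^ 2 ∂μ = ∫ ω, ‖Y ω - x‖ ^ 2 ∂μ - ‖m - x‖ ^ 2 := hvar
    _ ≤ ∫ ω, ‖Y ω - x‖ ^ 2 ∂μ := by nlinarith [sq_nonneg ‖m - x‖]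
    _ ≤ 18 * lam ^ (2 - α) * σ ^ α := step1
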